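/- Let Σ be K×K positive definite, B K×K positive semi-definite, and M a random binary vector with P(M = 1_K) > 0. Then e_K^T B e_K ≤ e_K^T E[V_M(Σ)]^{-1} E[V_M(Σ) B V_M(Σ)] E[V_M(Σ)]^{-1} e_K, with equality if and only if the random row vector e_K^T E[V_M(Σ)]^{-1} V_M(Σ) B^{1/2} is almost surely constant (over values m with P(M=m) > 0). -/

import Mathlib

open Matrix BigOperators Finset

/-- The `K × n_m` selection matrix `D_m` whose columns are the standard basis vectors
`e_t` for the indices `t` with `m t = true` (columns indexed by the subtype of such `t`). -/
noncomputable def selMat (K : ℕ) (m : Fin K → Bool) :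
    Matrix (Fin K) {t : Fin K // m t = true} ℝ :=
  Matrix.of fun i j => if i = (j : Fin K) then 1 else 0

/-- `V_m(Σ) = D_m (D_mᵀ Σ D_m)⁻¹ D_mᵀ`.  When `m = 0` the column index type is empty,
so this is the zero matrix, matching the convention `V_0(Σ) = 0`. -/
noncomputable def Vm (K : ℕ) (S : Matrix (Fin K) (Fin K) ℝ) (m : Fin K → Bool) :
    Matrix (Fin K) (Fin K) ℝ :=
  selMat K m * ((selMat K m)ᵀ * S * selMat K m)⁻¹ * (selMat K m)ᵀ

/-- `E[V_M(Σ)] = ∑ m P(M = m) V_m(Σ)`. -/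
noncomputable def EVm (K : ℕ) (S : Matrix (Fin K) (Fin K) ℝ)
    (p : (Fin K → Bool) → ℝ) : Matrix (Fin K) (Fin K) ℝ :=
  ∑ m : Fin K → Bool, p m • Vm K S m

noncomputable def posSemidefSqrt {n : Type*} [Fintype n] [DecidableEq n] {A : Matrix n n ℝ}
    (hA : A.PosSemidef) : Matrix n n ℝ :=
  hA.1.eigenvectorUnitary.1 * diagonal ((↑) ∘ (Real.sqrt ∘ hA.1.eigenvalues)) *
    (star hA.1.eigenvectorUnitary : Matrix n n ℝ)

lemma posSemidefSqrt_mul_self {n : Type*} [Fintype n] [DecidableEq n] {A : Matrix n n ℝ}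
    (hA : A.PosSemidef) : posSemidefSqrt hA * posSemidefSqrt hA = A := by
  have hU : (star hA.1.eigenvectorUnitary : Matrix n n ℝ) * hA.1.eigenvectorUnitary.1 = 1 :=
    Unitary.star_mul_self_of_mem hA.1.eigenvectorUnitary.2
  have hD : diagonal ((↑) ∘ (Real.sqrt ∘ hA.1.eigenvalues)) *
      diagonal ((↑) ∘ (Real.sqrt ∘ hA.1.eigenvalues)) =
      diagonal (RCLike.ofReal ∘ hA.1.eigenvalues : n → ℝ) := by
    rw [diagonal_mul_diagonal]
    congr 1
    funext i
    simp [Real.mul_self_sqrt (hA.eigenvalues_nonneg i)]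
  conv_rhs => rw [hA.1.spectral_theorem, Unitary.conjStarAlgAut_apply]
  rw [posSemidefSqrt]
  calc _ = hA.1.eigenvectorUnitary.1 * diagonal ((↑) ∘ (Real.sqrt ∘ hA.1.eigenvalues)) *
      ((star hA.1.eigenvectorUnitary : Matrix n n ℝ) * hA.1.eigenvectorUnitary.1) *
      diagonal ((↑) ∘ (Real.sqrt ∘ hA.1.eigenvalues)) *
      (star hA.1.eigenvectorUnitary : Matrix n n ℝ) := by simp only [Matrix.mul_assoc]
    _ = _ := by rw [hU, Matrix.mul_one, Matrix.mul_assoc _ (diagonal _) (diagonal _), hD]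

lemma posSemidefSqrt_isHermitian {n : Type*} [Fintype n] [DecidableEq n] {A : Matrix n n ℝ}
    (hA : A.PosSemidef) : (posSemidefSqrt hA).IsHermitian := by
  rw [Matrix.IsHermitian, posSemidefSqrt, conjTranspose_mul, conjTranspose_mul,
    diagonal_conjTranspose]
  simp only [Matrix.mul_assoc, star_eq_conjTranspose, conjTranspose_conjTranspose, star_trivial]

lemma jensen_dot {ι n : Type*} [Fintype ι] [Fintype n] (p : ι → ℝ)
    (hp0 : ∀ i, 0 ≤ p i) (hp1 : ∑ i, p i = 1) (w : ι → n → ℝ) :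
    (∑ i, p i • w i) ⬝ᵥ (∑ i, p i • w i) ≤ ∑ i, p i * (w i ⬝ᵥ w i) ∧
    ((∑ i, p i • w i) ⬝ᵥ (∑ i, p i • w i) = ∑ i, p i * (w i ⬝ᵥ w i) ↔
      ∀ i j, 0 < p i → 0 < p j → w i = w j) := by
  set μ := ∑ i, p i • w i with hμ
  have hexp : ∀ i j : ι, (w i - w j) ⬝ᵥ (w i - w j)
      = w i ⬝ᵥ w i + w j ⬝ᵥ w j - 2 * (w i ⬝ᵥ w j) := by
    intro i j
    simp only [sub_dotProduct, dotProduct_sub]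
    rw [dotProduct_comm (w j) (w i)]
    ring
  have hμμ : μ ⬝ᵥ μ = ∑ i, ∑ j, p i * p j * (w i ⬝ᵥ w j) := by
    rw [hμ]
    simp only [dotProduct, Finset.sum_apply, Pi.smul_apply, smul_eq_mul,
      Finset.sum_mul, Finset.mul_sum]
    rw [Finset.sum_comm]
    refine Finset.sum_congr rfl fun i _ => ?_
    rw [Finset.sum_comm]
    exact Finset.sum_congr rfl fun j _ => Finset.sum_congr rfl fun k _ => by ring
  have hA : ∑ i, ∑ j, p i * p j * (w i ⬝ᵥ w i) = ∑ i, p i * (w i ⬝ᵥ w i) := by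
    refine Finset.sum_congr rfl fun i _ => ?_
    rw [show (∑ j, p i * p j * (w i ⬝ᵥ w i))
        = (p i * (w i ⬝ᵥ w i)) * ∑ j, p j from by
      rw [Finset.mul_sum]; exact Finset.sum_congr rfl fun j _ => by ring]
    rw [hp1, mul_one]
  have hB : ∑ i, ∑ j, p i * p j * (w j ⬝ᵥ w j) = ∑ j, p j * (w j ⬝ᵥ w j) := by
    rw [Finset.sum_comm]
    refine Finset.sum_congr rfl fun j _ => ?_
    rw [show (∑ i, p i * p j * (w j ⬝ᵥ w j))
        = (p j * (w j ⬝ᵥ w j)) * ∑ i, p i from by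
      rw [Finset.mul_sum]; exact Finset.sum_congr rfl fun i _ => by ring]
    rw [hp1, mul_one]
  have key : ∑ i, ∑ j, p i * p j * ((w i - w j) ⬝ᵥ (w i - w j))
      = 2 * (∑ i, p i * (w i ⬝ᵥ w i)) - 2 * (μ ⬝ᵥ μ) := by
    have h1 : ∀ i j : ι, p i * p j * ((w i - w j) ⬝ᵥ (w i - w j))
        = p i * p j * (w i ⬝ᵥ w i) + p i * p j * (w j ⬝ᵥ w j)
          - 2 * (p i * p j * (w i ⬝ᵥ w j)) := by
      intro i j; rw [hexp]; ring
    calc ∑ i, ∑ j, p i * p j * ((w i - w j) ⬝ᵥ (w i - w j))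
        = ∑ i, ∑ j, (p i * p j * (w i ⬝ᵥ w i) + p i * p j * (w j ⬝ᵥ w j)
            - 2 * (p i * p j * (w i ⬝ᵥ w j))) :=
          Finset.sum_congr rfl fun i _ => Finset.sum_congr rfl fun j _ => h1 i j
      _ = (∑ i, ∑ j, p i * p j * (w i ⬝ᵥ w i))
            + (∑ i, ∑ j, p i * p j * (w j ⬝ᵥ w j))
            - 2 * ∑ i, ∑ j, p i * p j * (w i ⬝ᵥ w j) := by
          simp [Finset.sum_add_distrib, Finset.sum_sub_distrib, Finset.mul_sum]
      _ = 2 * (∑ i, p i * (w i ⬝ᵥ w i)) - 2 * (μ ⬝ᵥ μ) := by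
          rw [hA, hB, ← hμμ]; ring
  have hterm : ∀ i j : ι, 0 ≤ p i * p j * ((w i - w j) ⬝ᵥ (w i - w j)) := by
    intro i j
    have : (0:ℝ) ≤ (w i - w j) ⬝ᵥ (w i - w j) :=
      Finset.sum_nonneg fun k _ => mul_self_nonneg _
    exact mul_nonneg (mul_nonneg (hp0 i) (hp0 j)) this
  have hsum_nonneg : 0 ≤ ∑ i, ∑ j, p i * p j * ((w i - w j) ⬝ᵥ (w i - w j)) :=
    Finset.sum_nonneg fun i _ => Finset.sum_nonneg fun j _ => hterm i j
  constructor
  · nlinarith [hsum_nonneg, key]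
  constructor
  · intro heq
    have hzero : ∑ i, ∑ j, p i * p j * ((w i - w j) ⬝ᵥ (w i - w j)) = 0 := by
      rw [key, ← heq]; ring
    intro i j hi hj
    have h0 : p i * p j * ((w i - w j) ⬝ᵥ (w i - w j)) = 0 := by
      have h1 := (Finset.sum_eq_zero_iff_of_nonneg
        (fun i _ => Finset.sum_nonneg fun j _ => hterm i j)).mp hzero i (by simp)
      exact (Finset.sum_eq_zero_iff_of_nonneg (fun j _ => hterm i j)).mp h1 j (by simp)
    have hd : (w i - w j) ⬝ᵥ (w i - w j) = 0 := by
      have hpij : (0:ℝ) < p i * p j := mul_pos hi hj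
      rcases mul_eq_zero.mp h0 with h | h
      · exact absurd h hpij.ne'
      · exact h
    have := dotProduct_self_eq_zero.mp hd
    exact sub_eq_zero.mp this
  · intro hconst
    have hzero : ∑ i, ∑ j, p i * p j * ((w i - w j) ⬝ᵥ (w i - w j)) = 0 := by
      refine Finset.sum_eq_zero fun i _ => Finset.sum_eq_zero fun j _ => ?_
      rcases (hp0 i).eq_or_lt with hi | hi
      · rw [← hi]; ring
      rcases (hp0 j).eq_or_lt with hj | hj
      · rw [← hj]; ring
      rw [hconst i j hi hj]; simp
    nlinarith [key, hzero]

section facts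
variable {K : ℕ} {S : Matrix (Fin K) (Fin K) ℝ} (m : Fin K → Bool)

lemma selMat_mulVec_eq_zero {x : {t : Fin K // m t = true} → ℝ}
    (h : selMat K m *ᵥ x = 0) : x = 0 := by
  funext j
  have := congrFun h (j : Fin K)
  simp only [mulVec, dotProduct, selMat, Matrix.of_apply, Pi.zero_apply] at this
  rw [Finset.sum_eq_single j] at this
  · simpa using this
  · intro b _ hb
    rw [if_neg, zero_mul]
    intro hc
    exact hb (Subtype.ext hc.symm)
  · simp

lemma N_posDef (hS : S.PosDef) : ((selMat K m)ᵀ * S * selMat K m).PosDef := by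
  refine Matrix.posDef_iff_dotProduct_mulVec.mpr ⟨?_, ?_⟩
  · have hSh : Sᵀ = S := by
      have := hS.isHermitian
      rwa [Matrix.IsHermitian, conjTranspose_eq_transpose_of_trivial] at this
    show _ᴴ = _
    rw [conjTranspose_eq_transpose_of_trivial, transpose_mul, transpose_mul,
      transpose_transpose, hSh, Matrix.mul_assoc]
  · intro x hx
    have hDx : selMat K m *ᵥ x ≠ 0 := fun h => hx (selMat_mulVec_eq_zero m h)
    have := hS.dotProduct_mulVec_pos hDx
    simp only [star_trivial] at this ⊢
    rw [Matrix.mul_assoc, ← Matrix.mulVec_mulVec, ← Matrix.mulVec_mulVec,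
      dotProduct_mulVec, vecMul_transpose]
    exact this

lemma Vm_symm (hS : S.PosDef) : (Vm K S m)ᵀ = Vm K S m := by
  have hN := N_posDef m hS
  have hNh : ((selMat K m)ᵀ * S * selMat K m)ᵀ = (selMat K m)ᵀ * S * selMat K m := by
    have := hN.isHermitian
    rwa [Matrix.IsHermitian, conjTranspose_eq_transpose_of_trivial] at this
  rw [Vm, transpose_mul, transpose_mul, transpose_transpose, transpose_nonsing_inv, hNh]
  simp only [Matrix.mul_assoc]

lemma Vm_posSemidef (hS : S.PosDef) : (Vm K S m).PosSemidef := by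
  have hN := (N_posDef m hS).inv
  have := hN.posSemidef.mul_mul_conjTranspose_same (selMat K m)
  rwa [conjTranspose_eq_transpose_of_trivial] at this

lemma selMat_one_mul_transpose :
    selMat K (fun _ => true) * (selMat K (fun _ => true))ᵀ = 1 := by
  ext i i'
  simp only [Matrix.mul_apply, selMat, transpose_apply, Matrix.of_apply, Matrix.one_apply]
  rw [Finset.sum_eq_single (⟨i, rfl⟩ : {t : Fin K // (fun _ => true) t = true})]
  · by_cases h : i = i' <;> simp [h, eq_comm]
  · intro b _ hb
    rw [if_neg, zero_mul]
    intro hc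
    exact hb (Subtype.ext hc.symm)
  · simp

lemma Vm_one (hS : S.PosDef) : Vm K S (fun _ => true) = S⁻¹ := by
  set D := selMat K (fun _ : Fin K => true) with hD
  set N := Dᵀ * S * D with hN0
  have hN := N_posDef (K := K) (fun _ => true) hS
  have hinv : N⁻¹ * N = 1 :=
    Matrix.nonsing_inv_mul _ (isUnit_iff_isUnit_det _ |>.mp hN.isUnit)
  have h2 : N * Dᵀ = Dᵀ * S := by
    rw [hN0, Matrix.mul_assoc (Dᵀ * S), hD, selMat_one_mul_transpose, Matrix.mul_one]
  have h1 : Vm K S (fun _ => true) * S = 1 := by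
    calc Vm K S (fun _ => true) * S = D * N⁻¹ * (Dᵀ * S) := by
          rw [Vm, Matrix.mul_assoc]
      _ = D * N⁻¹ * (N * Dᵀ) := by rw [h2]
      _ = D * (N⁻¹ * N) * Dᵀ := by simp only [Matrix.mul_assoc]
      _ = 1 := by rw [hinv, Matrix.mul_one, hD, selMat_one_mul_transpose]
  exact (Matrix.inv_eq_left_inv h1).symm

end facts

lemma dot_sum_smul {n ι : Type*} [Fintype n] [Fintype ι] (x : n → ℝ) (c : ι → ℝ)
    (y : ι → n → ℝ) : x ⬝ᵥ (∑ i, c i • y i) = ∑ i, c i * (x ⬝ᵥ y i) := by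
  simp only [dotProduct, Finset.sum_apply, Pi.smul_apply, smul_eq_mul, Finset.mul_sum]
  rw [Finset.sum_comm]
  exact Finset.sum_congr rfl fun i _ => Finset.sum_congr rfl fun k _ => by ring

lemma sum_smul_mulVec {n ι : Type*} [Fintype n] [Fintype ι] [DecidableEq n]
    (c : ι → ℝ) (M : ι → Matrix n n ℝ) (x : n → ℝ) :
    (∑ i, c i • M i) *ᵥ x = ∑ i, c i • (M i *ᵥ x) := by
  funext k
  simp only [mulVec, dotProduct, Matrix.sum_apply, Matrix.smul_apply, smul_eq_mul,
    Finset.sum_apply, Pi.smul_apply, Finset.sum_mul]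
  rw [Finset.sum_comm]
  refine Finset.sum_congr rfl fun i _ => ?_
  rw [Finset.mul_sum]
  exact Finset.sum_congr rfl fun j _ => by ring

lemma EVm_posDef {K : ℕ} {S : Matrix (Fin K) (Fin K) ℝ} (hS : S.PosDef)
    (p : (Fin K → Bool) → ℝ) (hp0 : ∀ m, 0 ≤ p m)
    (hfull : 0 < p (fun _ => true)) : (EVm K S p).PosDef := by
  refine Matrix.posDef_iff_dotProduct_mulVec.mpr ⟨?_, ?_⟩
  · show _ᴴ = _
    rw [conjTranspose_eq_transpose_of_trivial, EVm, transpose_sum]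
    exact Finset.sum_congr rfl fun m _ => by rw [transpose_smul, Vm_symm m hS]
  · intro x hx
    rw [star_trivial, EVm, sum_smul_mulVec, dot_sum_smul]
    have hterm : ∀ m : Fin K → Bool, 0 ≤ p m * (x ⬝ᵥ Vm K S m *ᵥ x) := by
      intro m
      refine mul_nonneg (hp0 m) ?_
      have := (Vm_posSemidef m hS).dotProduct_mulVec_nonneg x
      rwa [star_trivial] at this
    have hfull' : 0 < p (fun _ => true) * (x ⬝ᵥ Vm K S (fun _ => true) *ᵥ x) := by
      refine mul_pos hfull ?_
      rw [Vm_one hS]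
      have := hS.inv.dotProduct_mulVec_pos hx
      rwa [star_trivial] at this
    calc (0:ℝ) < p (fun _ => true) * (x ⬝ᵥ Vm K S (fun _ => true) *ᵥ x) := hfull'
      _ ≤ ∑ m : Fin K → Bool, p m * (x ⬝ᵥ Vm K S m *ᵥ x) :=
          Finset.single_le_sum (fun m _ => hterm m) (Finset.mem_univ _)

/-- Lemma 1(4): for positive definite `Σ`, positive semi-definite `B` and
a random binary vector `M` with `P(M = 1_K) > 0`,
`e_Kᵀ B e_K ≤ e_Kᵀ E[V_M(Σ)]⁻¹ E[V_M(Σ) B V_M(Σ)] E[V_M(Σ)]⁻¹ e_K`,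
with equality iff the row vector `e_Kᵀ E[V_M(Σ)]⁻¹ V_m(Σ) B^{1/2}` is constant over the
values `m` with `P(M = m) > 0`. -/
theorem stmt6 (K : ℕ)
    (S B : Matrix (Fin (K+1)) (Fin (K+1)) ℝ) (hS : S.PosDef) (hB : B.PosSemidef)
    (p : (Fin (K+1) → Bool) → ℝ) (hp0 : ∀ m, 0 ≤ p m) (hp1 : ∑ m, p m = 1)
    (hfull : 0 < p (fun _ => true)) :
    B (Fin.last K) (Fin.last K)
      ≤ ((EVm (K+1) S p)⁻¹
          * (∑ m : Fin (K+1) → Bool, p m • (Vm (K+1) S m * B * Vm (K+1) S m))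
          * (EVm (K+1) S p)⁻¹) (Fin.last K) (Fin.last K) ∧
    (B (Fin.last K) (Fin.last K)
        = ((EVm (K+1) S p)⁻¹
            * (∑ m : Fin (K+1) → Bool, p m • (Vm (K+1) S m * B * Vm (K+1) S m))
            * (EVm (K+1) S p)⁻¹) (Fin.last K) (Fin.last K)
      ↔ ∀ m m' : Fin (K+1) → Bool, 0 < p m → 0 < p m' →
          ((EVm (K+1) S p)⁻¹ * Vm (K+1) S m * posSemidefSqrt hB) (Fin.last K)
            = ((EVm (K+1) S p)⁻¹ * Vm (K+1) S m' * posSemidefSqrt hB) (Fin.last K)) := by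
  have hEV := EVm_posDef hS p hp0 hfull
  set e := Fin.last K with he
  set A := (EVm (K+1) S p)⁻¹ with hAdef
  set Q := posSemidefSqrt hB with hQdef
  have hAE : A * EVm (K+1) S p = 1 :=
    Matrix.nonsing_inv_mul _ (isUnit_iff_isUnit_det _ |>.mp hEV.isUnit)
  have hQQ : Q * Q = B := posSemidefSqrt_mul_self hB
  have hQsym : Qᵀ = Q := by
    have := posSemidefSqrt_isHermitian hB
    rwa [Matrix.IsHermitian, conjTranspose_eq_transpose_of_trivial] at this
  have hEVsym : (EVm (K+1) S p)ᵀ = EVm (K+1) S p := by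
    have := hEV.isHermitian
    rwa [Matrix.IsHermitian, conjTranspose_eq_transpose_of_trivial] at this
  have hAsym : Aᵀ = A := by
    rw [hAdef, transpose_nonsing_inv, hEVsym]
  set w : (Fin (K+1) → Bool) → (Fin (K+1) → ℝ) :=
    fun m => (A * Vm (K+1) S m * Q) e with hw
  -- each summand entry is a squared norm
  have claim1 : ∀ m : Fin (K+1) → Bool,
      (A * (Vm (K+1) S m * B * Vm (K+1) S m) * A) e e = w m ⬝ᵥ w m := by
    intro m
    have hX : (A * Vm (K+1) S m * Q) * (A * Vm (K+1) S m * Q)ᵀ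
        = A * (Vm (K+1) S m * B * Vm (K+1) S m) * A := by
      rw [transpose_mul, transpose_mul, hQsym, Vm_symm m hS, hAsym, ← hQQ]
      simp only [Matrix.mul_assoc]
    rw [← hX, Matrix.mul_apply]
    simp only [hw, dotProduct, transpose_apply]
  -- the middle entry is the weighted sum of squared norms
  have claim2 : ((A * (∑ m : Fin (K+1) → Bool, p m • (Vm (K+1) S m * B * Vm (K+1) S m)) * A)
      e e) = ∑ m : Fin (K+1) → Bool, p m * (w m ⬝ᵥ w m) := by
    have h1 : A * (∑ m : Fin (K+1) → Bool, p m • (Vm (K+1) S m * B * Vm (K+1) S m)) * A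
        = ∑ m : Fin (K+1) → Bool, p m • (A * (Vm (K+1) S m * B * Vm (K+1) S m) * A) := by
      rw [Finset.mul_sum, Finset.sum_mul]
      exact Finset.sum_congr rfl fun m _ => by
        rw [Matrix.mul_smul, Matrix.smul_mul]
    rw [h1, Matrix.sum_apply]
    exact Finset.sum_congr rfl fun m _ => by
      rw [Matrix.smul_apply, smul_eq_mul, claim1 m]
  -- the mean of the w's is the e-th row of Q
  have claim3 : ∑ m : Fin (K+1) → Bool, p m • w m = Q e := by
    have h1 : ∑ m : Fin (K+1) → Bool, p m • (A * Vm (K+1) S m * Q) = Q := by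
      have h2 : ∑ m : Fin (K+1) → Bool, p m • (A * Vm (K+1) S m * Q)
          = A * EVm (K+1) S p * Q := by
        rw [EVm, Finset.mul_sum, Finset.sum_mul]
        exact Finset.sum_congr rfl fun m _ => by
          rw [Matrix.mul_smul, Matrix.smul_mul]
      rw [h2, hAE, Matrix.one_mul]
    funext j
    calc (∑ m : Fin (K+1) → Bool, p m • w m) j
        = (∑ m : Fin (K+1) → Bool, p m • (A * Vm (K+1) S m * Q)) e j := by
          rw [Matrix.sum_apply]
          simp only [Finset.sum_apply, Pi.smul_apply, Matrix.smul_apply, hw]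
      _ = Q e j := by rw [h1]
  have claim4 : B e e = (Q e) ⬝ᵥ (Q e) := by
    rw [← hQQ, Matrix.mul_apply]
    simp only [dotProduct]
    refine Finset.sum_congr rfl fun j _ => ?_
    have hj : Q j e = Q e j := by
      rw [show Q j e = Qᵀ e j from (transpose_apply Q e j).symm, hQsym]
    rw [hj]
  obtain ⟨hle, hiff⟩ := jensen_dot p hp0 hp1 w
  rw [claim3, ← claim4] at hle hiff
  rw [claim2]
  exact ⟨hle, hiff⟩
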